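/- Each f_k (1 ≤ k ≤ r) is a nonzero element of K_V, and RS_V equals the 𝔽_q-subalgebra of K_V generated by R_V together with the inverses f_1^{−1},…,f_r^{−1}; in short, RS_V = R_V[f_1^{−1},…,f_r^{−1}]. (Proposition 1.31 of the paper.) -/

import Mathlib

noncomputable section

set_option synthInstance.maxHeartbeats 1000000
set_option maxHeartbeats 1000000

variable (Fq : Type) [Field Fq] [Fintype Fq]

/-- The field `K_V`, the quotient field of the symmetric algebra of an `r`-dimensional
`𝔽_q`-vector space `V`, realized via a choice of basis as a rational function field. -/
abbrev KV (r : ℕ) : Type := FractionRing (MvPolynomial (Fin r) Fq)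

variable {V : Type} [AddCommGroup V] [Module Fq V]

/-- The canonical embedding `V → Sym(V) → K_V`, written in terms of the basis `b`. -/
def embB {r : ℕ} (b : Module.Basis (Fin r) Fq V) (v : V) : KV Fq r :=
  algebraMap (MvPolynomial (Fin r) Fq) (KV Fq r)
    (∑ i : Fin r, MvPolynomial.C (b.repr v i) * MvPolynomial.X i)

/-- `1/v ∈ K_V` (with the convention `1/0 = 0`). -/
def ooB {r : ℕ} (b : Module.Basis (Fin r) Fq V) (v : V) : KV Fq r := (embB Fq b v)⁻¹

/-- `R_V`: the `𝔽_q`-subalgebra of `K_V` generated by the `1/v` for `v ∈ V∖{0}`. -/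
def RVB {r : ℕ} (b : Module.Basis (Fin r) Fq V) : Subalgebra Fq (KV Fq r) :=
  Algebra.adjoin Fq (Set.range (ooB Fq b))

instance {r : ℕ} (b : Module.Basis (Fin r) Fq V) : CommRing (RVB Fq b) :=
  Subalgebra.toCommRing _

instance {r : ℕ} (b : Module.Basis (Fin r) Fq V) : Algebra Fq (RVB Fq b) :=
  Subalgebra.algebra _

/-- `1/v` as an element of `R_V`. -/
def gB {r : ℕ} (b : Module.Basis (Fin r) Fq V) (v : V) : RVB Fq b :=
  ⟨ooB Fq b v, Algebra.subset_adjoin (Set.mem_range_self v)⟩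

/-- The subspace `V_k = 𝔽_q X_1 + ⋯ + 𝔽_q X_k` spanned by the first `k` basis vectors. -/
def Vk {r : ℕ} (b : Module.Basis (Fin r) Fq V) (k : ℕ) : Submodule Fq V :=
  Submodule.span Fq (b '' {i : Fin r | (i : ℕ) < k})

/-- `f_k = ∑_{w ∈ V_{k-1}} 1/(X_k + w) ∈ R_V` (with `0`-indexed `k`, so `fB Fq b k` is the
paper's `f_{k+1}`). -/
def fB {r : ℕ} (b : Module.Basis (Fin r) Fq V) (k : Fin r) : RVB Fq b :=
  ∑ᶠ w ∈ (Vk Fq b (k : ℕ) : Set V), gB Fq b (b k + w)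

/-- The set `E_k = {1/(X_k + w) : w ∈ V_{k-1}} ⊆ R_V` (with `0`-indexed `k`). -/
def EB {r : ℕ} (b : Module.Basis (Fin r) Fq V) (k : Fin r) : Set (RVB Fq b) :=
  {x | ∃ w ∈ (Vk Fq b (k : ℕ) : Set V), x = gB Fq b (b k + w)}

/-- The set `Δ_k = {1/(X_k + w) : w ∈ V_{k-1}∖{0}} ∪ {1} ⊆ R_V` (with `0`-indexed `k`). -/
def DB {r : ℕ} (b : Module.Basis (Fin r) Fq V) (k : Fin r) : Set (RVB Fq b) :=
  {x | ∃ w ∈ (Vk Fq b (k : ℕ) : Set V), w ≠ 0 ∧ x = gB Fq b (b k + w)} ∪ {1}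

/-- `RS_V`: the `𝔽_q`-subalgebra of `K_V` generated by `R_V` and `S_V = Sym(V)`. -/
def RSVB {r : ℕ} (b : Module.Basis (Fin r) Fq V) : Subalgebra Fq (KV Fq r) :=
  Algebra.adjoin Fq (Set.range (ooB Fq b) ∪ Set.range (embB Fq b))

/-! ### Auxiliary lemmas -/

theorem lagrange_const {F : Type*} [Field F] [DecidableEq F] (s : Finset F) (hs : s.Nonempty)
    (t c : F) (hc : ∀ a ∈ s, ∏ b ∈ s.erase a, (a - b) = c) :
    ∑ a ∈ s, ∏ b ∈ s.erase a, (t - b) = c := by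
  obtain ⟨a0, ha0⟩ := hs
  have hc0 : c ≠ 0 := by
    rw [← hc a0 ha0]
    exact Finset.prod_ne_zero_iff.mpr fun b hb =>
      sub_ne_zero.mpr (Ne.symm (Finset.ne_of_mem_erase hb))
  have h1 := Lagrange.sum_basis (v := id) (s := s) (Set.injOn_id _) ⟨a0, ha0⟩
  have h2 := congrArg (Polynomial.eval t) h1
  rw [Polynomial.eval_finset_sum, Polynomial.eval_one] at h2
  have h3 : ∀ a ∈ s, Polynomial.eval t (Lagrange.basis s id a)
      = c⁻¹ * ∏ b ∈ s.erase a, (t - b) := by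
    intro a ha
    rw [Lagrange.basis, Polynomial.eval_prod, ← hc a ha, ← Finset.prod_inv_distrib,
      ← Finset.prod_mul_distrib]
    refine Finset.prod_congr rfl fun x hx => ?_
    simp [Lagrange.basisDivisor]
  rw [Finset.sum_congr rfl h3, ← Finset.mul_sum] at h2
  rw [inv_mul_eq_one₀ hc0] at h2; exact h2.symm

set_option linter.unusedSectionVars false

section Aux
variable {Fq : Type} [Field Fq] [Fintype Fq]
variable {V : Type} [AddCommGroup V] [Module Fq V]
variable {r : ℕ} (b : Module.Basis (Fin r) Fq V) [DecidableEq V]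

theorem embB_add (u v : V) : embB Fq b (u + v) = embB Fq b u + embB Fq b v := by
  unfold embB
  rw [← map_add]
  congr 1
  rw [← Finset.sum_add_distrib]
  simp [add_mul]

theorem embB_smul (a : Fq) (v : V) :
    embB Fq b (a • v) = algebraMap Fq (KV Fq r) a * embB Fq b v := by
  unfold embB
  rw [IsScalarTower.algebraMap_apply Fq (MvPolynomial (Fin r) Fq) (KV Fq r), ← map_mul]
  congr 1
  rw [MvPolynomial.algebraMap_eq, Finset.mul_sum]
  refine Finset.sum_congr rfl fun i _ => ?_
  rw [← mul_assoc, ← MvPolynomial.C_mul, LinearEquiv.map_smul, Finsupp.smul_apply, smul_eq_mul]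

theorem embB_zero : embB Fq b 0 = 0 := by
  unfold embB; simp

theorem embB_eq_zero {v : V} (h : embB Fq b v = 0) : v = 0 := by
  unfold embB at h
  rw [← (algebraMap (MvPolynomial (Fin r) Fq) (KV Fq r)).map_zero] at h
  have hp := IsFractionRing.injective (MvPolynomial (Fin r) Fq) (KV Fq r) h
  have hrepr : ∀ i : Fin r, b.repr v i = 0 := by
    intro i
    have := congrArg (MvPolynomial.eval (Pi.single i (1 : Fq))) hp
    simpa [MvPolynomial.eval_sum, Pi.single_apply, mul_ite, Finset.sum_ite_eq'] using this
  apply b.repr.map_eq_zero_iff.mp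
  ext i
  exact hrepr i

theorem embB_injective : Function.Injective (embB Fq b) := by
  intro u v h
  have h0 : embB Fq b (u - v) = 0 := by
    rw [sub_eq_add_neg, embB_add, ← neg_one_smul Fq v, embB_smul, h, map_neg, map_one]
    ring
  exact sub_eq_zero.mp (embB_eq_zero b h0)

theorem embB_sub (u v : V) : embB Fq b (u - v) = embB Fq b u - embB Fq b v := by
  rw [sub_eq_add_neg, embB_add, ← neg_one_smul Fq v, embB_smul, map_neg, map_one]
  ring

theorem embB_basis (i : Fin r) :
    embB Fq b (b i) = algebraMap (MvPolynomial (Fin r) Fq) (KV Fq r) (MvPolynomial.X i) := by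
  unfold embB
  congr 1
  rw [Finset.sum_eq_single i]
  · simp [Module.Basis.repr_self]
  · intro j _ hj
    simp [Module.Basis.repr_self, Finsupp.single_apply, Ne.symm hj]
  · simp

theorem embB_repr_sum (v : V) :
    embB Fq b v = ∑ i : Fin r, algebraMap Fq (KV Fq r) (b.repr v i) * embB Fq b (b i) := by
  simp only [embB_basis]
  unfold embB
  rw [map_sum]
  refine Finset.sum_congr rfl fun i _ => ?_
  rw [map_mul]
  congr 1

def Wfin (k : ℕ) : Finset V :=
  haveI : Finite V := Finite.of_equiv _ b.equivFun.symm.toEquiv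
  (Set.toFinite ((Vk Fq b k : Submodule Fq V) : Set V)).toFinset

theorem mem_Wfin {k : ℕ} {w : V} : w ∈ Wfin b k ↔ w ∈ Vk Fq b k :=
  Set.Finite.mem_toFinset _

theorem zero_mem_Wfin (k : ℕ) : (0 : V) ∈ Wfin b k :=
  (mem_Wfin b).mpr (Submodule.zero_mem _)

theorem bk_add_ne_zero {k : Fin r} {w : V} (hw : w ∈ Vk Fq b (k : ℕ)) : b k + w ≠ 0 := by
  intro h
  have hk : b k ∈ Vk Fq b (k : ℕ) := by
    have hbk : b k = -w := eq_neg_of_add_eq_zero_left h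
    rw [hbk]; exact Submodule.neg_mem _ hw
  rw [Vk, Module.Basis.mem_span_image] at hk
  have hmem : k ∈ {i : Fin r | (i : ℕ) < (k : ℕ)} := by
    apply hk
    simp [Module.Basis.repr_self, Finsupp.support_single_ne_zero]
  simp only [Set.mem_setOf_eq, lt_self_iff_false] at hmem

theorem embB_bk_add_ne_zero {k : Fin r} {w : V} (hw : w ∈ Wfin b (k : ℕ)) :
    embB Fq b (b k + w) ≠ 0 := fun h =>
  bk_add_ne_zero b ((mem_Wfin b).mp hw) (embB_eq_zero b h)

theorem fB_coe (k : Fin r) :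
    (fB Fq b k : KV Fq r) = ∑ w ∈ Wfin b (k : ℕ), (embB Fq b (b k + w))⁻¹ := by
  have hS : ((Vk Fq b (k : ℕ) : Submodule Fq V) : Set V) = ↑(Wfin b (k : ℕ)) :=
    (Set.Finite.coe_toFinset _).symm
  rw [fB, hS, finsum_mem_coe_finset, AddSubmonoidClass.coe_finset_sum]
  rfl

theorem fB_mul_prod (k : Fin r) :
    (fB Fq b k : KV Fq r) * ∏ w ∈ Wfin b (k : ℕ), embB Fq b (b k + w)
      = ∏ u ∈ (Wfin b (k : ℕ)).erase 0, embB Fq b u := by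
  classical
  set s := Wfin b (k : ℕ) with hs
  set t := embB Fq b (b k) with ht
  set φ : V → KV Fq r := fun w => -embB Fq b w with hφdef
  have hφinj : Function.Injective φ := fun x y h => embB_injective b (neg_injective h)
  set c : KV Fq r := ∏ u ∈ s.erase 0, embB Fq b u with hc
  rw [fB_coe, Finset.sum_mul]
  have hterm : ∀ w ∈ s, (embB Fq b (b k + w))⁻¹ * ∏ w' ∈ s, embB Fq b (b k + w')
      = ∏ w' ∈ s.erase w, embB Fq b (b k + w') := by
    intro w hw
    rw [← Finset.mul_prod_erase s _ hw, ← mul_assoc,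
      inv_mul_cancel₀ (embB_bk_add_ne_zero b hw), one_mul]
  rw [Finset.sum_congr rfl hterm]
  have hprod : ∀ w ∈ s, ∏ w' ∈ s.erase w, embB Fq b (b k + w')
      = ∏ x ∈ (s.image φ).erase (φ w), (t - x) := by
    intro w hw
    rw [← Finset.image_erase hφinj, Finset.prod_image (fun x _ y _ h => hφinj h)]
    refine Finset.prod_congr rfl fun w' _ => ?_
    rw [hφdef]
    simp only [sub_neg_eq_add]
    rw [← embB_add]
  have hcc : ∀ a ∈ s.image φ, ∏ x ∈ (s.image φ).erase a, (a - x) = c := by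
    intro a ha
    obtain ⟨w, hw, rfl⟩ := Finset.mem_image.mp ha
    rw [← Finset.image_erase hφinj, Finset.prod_image (fun x _ y _ h => hφinj h), hc]
    refine Finset.prod_nbij' (fun w' => w' - w) (fun u => u + w) ?_ ?_ ?_ ?_ ?_
    · intro w' hw'
      rw [Finset.mem_erase] at hw' ⊢
      exact ⟨sub_ne_zero.mpr hw'.1, (mem_Wfin b).mpr
        (Submodule.sub_mem _ ((mem_Wfin b).mp hw'.2) ((mem_Wfin b).mp hw))⟩
    · intro u hu
      rw [Finset.mem_erase] at hu ⊢
      refine ⟨fun h => hu.1 (by rwa [add_eq_right] at h), (mem_Wfin b).mpr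
        (Submodule.add_mem _ ((mem_Wfin b).mp hu.2) ((mem_Wfin b).mp hw))⟩
    · intro w' _; exact sub_add_cancel _ _
    · intro u _; exact add_sub_cancel_right _ _
    · intro w' _
      rw [hφdef]
      simp only [neg_sub_neg]
      rw [← embB_sub]
  have hne : (s.image φ).Nonempty := ⟨φ 0, Finset.mem_image_of_mem _ (zero_mem_Wfin b _)⟩
  have main := lagrange_const (s.image φ) hne t c hcc
  rw [Finset.sum_image (fun x _ y _ h => hφinj h)] at main
  rw [Finset.sum_congr rfl hprod]
  exact main

theorem c_ne_zero (k : ℕ) : (∏ u ∈ (Wfin b k).erase 0, embB Fq b u) ≠ 0 :=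
  Finset.prod_ne_zero_iff.mpr fun u hu h => (Finset.mem_erase.mp hu).1 (embB_eq_zero b h)

theorem P_ne_zero (k : Fin r) : (∏ w ∈ Wfin b (k : ℕ), embB Fq b (b k + w)) ≠ 0 :=
  Finset.prod_ne_zero_iff.mpr fun w hw => embB_bk_add_ne_zero b hw

theorem fB_ne_zero (k : Fin r) : (fB Fq b k : KV Fq r) ≠ 0 := by
  intro h
  have hkey := fB_mul_prod b k
  rw [h, zero_mul] at hkey
  exact c_ne_zero b (k : ℕ) hkey.symm

theorem P_eq (k : Fin r) :
    (∏ w ∈ Wfin b (k : ℕ), embB Fq b (b k + w))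
      = (fB Fq b k : KV Fq r)⁻¹ * ∏ u ∈ (Wfin b (k : ℕ)).erase 0, embB Fq b u := by
  rw [← fB_mul_prod b k, ← mul_assoc, inv_mul_cancel₀ (fB_ne_zero b k), one_mul]

theorem fB_inv_eq (k : Fin r) :
    (fB Fq b k : KV Fq r)⁻¹
      = (∏ w ∈ Wfin b (k : ℕ), embB Fq b (b k + w))
        * ∏ u ∈ (Wfin b (k : ℕ)).erase 0, (embB Fq b u)⁻¹ := by
  rw [Finset.prod_inv_distrib, ← fB_mul_prod b k, mul_inv, ← mul_assoc,
    mul_comm _ ((fB Fq b k : KV Fq r))⁻¹, mul_assoc,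
    mul_inv_cancel₀ (P_ne_zero b k), mul_one]

theorem xk_eq (k : Fin r) :
    embB Fq b (b k)
      = (∏ w ∈ Wfin b (k : ℕ), embB Fq b (b k + w))
        * ∏ w ∈ (Wfin b (k : ℕ)).erase 0, (embB Fq b (b k + w))⁻¹ := by
  rw [← Finset.mul_prod_erase _ _ (zero_mem_Wfin b (k : ℕ)), add_zero, mul_assoc,
    ← Finset.prod_mul_distrib]
  rw [Finset.prod_congr rfl (fun w hw =>
    mul_inv_cancel₀ (embB_bk_add_ne_zero b (Finset.mem_of_mem_erase hw)))]
  rw [Finset.prod_const_one, mul_one]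

end Aux

/-- **Proposition 1.31**: each `f_k` is nonzero in `K_V` and
`RS_V = R_V[f_1^{-1}, …, f_r^{-1}]`. -/
theorem statement14 (Fq : Type) [Field Fq] [Fintype Fq]
    (V : Type) [AddCommGroup V] [Module Fq V]
    (r : ℕ) (hr : 1 ≤ r) (b : Module.Basis (Fin r) Fq V) :
    (∀ k : Fin r, (fB Fq b k : KV Fq r) ≠ 0) ∧
    RSVB Fq b = Algebra.adjoin Fq
      ((RVB Fq b : Set (KV Fq r)) ∪ Set.range (fun k : Fin r => (fB Fq b k : KV Fq r)⁻¹)) := by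
  classical
  refine ⟨fun k => fB_ne_zero b k, ?_⟩
  set A := Algebra.adjoin Fq
      ((RVB Fq b : Set (KV Fq r)) ∪ Set.range (fun k : Fin r => (fB Fq b k : KV Fq r)⁻¹))
    with hA
  have hRVA : (RVB Fq b : Set (KV Fq r)) ⊆ (A : Set (KV Fq r)) := fun x hx =>
    Algebra.subset_adjoin (Set.mem_union_left _ hx)
  have hooA : ∀ v : V, ooB Fq b v ∈ A := fun v =>
    hRVA (Algebra.subset_adjoin (Set.mem_range_self v))
  have hfA : ∀ k : Fin r, (fB Fq b k : KV Fq r)⁻¹ ∈ A := fun k =>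
    Algebra.subset_adjoin (Set.mem_union_right _ (Set.mem_range_self k))
  -- all basis vectors lie in A
  have hxk : ∀ n : ℕ, ∀ k : Fin r, (k : ℕ) < n → embB Fq b (b k) ∈ A := by
    intro n
    induction n with
    | zero => intro k hk; omega
    | succ n ih =>
      intro k hk
      have hspan : ∀ u ∈ Vk Fq b (k : ℕ), embB Fq b u ∈ A := by
        intro u hu
        refine Submodule.span_induction ?_ ?_ ?_ ?_ hu
        · rintro x ⟨j, hj, rfl⟩
          exact ih j (lt_of_lt_of_le hj (Nat.lt_succ_iff.mp hk))
        · rw [embB_zero]; exact zero_mem A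
        · intro x y _ _ hx hy
          rw [embB_add]; exact add_mem hx hy
        · intro a x _ hx
          rw [embB_smul]; exact mul_mem (A.algebraMap_mem a) hx
      have hcA : (∏ u ∈ (Wfin b (k : ℕ)).erase 0, embB Fq b u) ∈ A :=
        prod_mem fun u hu => hspan u ((mem_Wfin b).mp (Finset.mem_of_mem_erase hu))
      have hPA : (∏ w ∈ Wfin b (k : ℕ), embB Fq b (b k + w)) ∈ A := by
        rw [P_eq b k]
        exact mul_mem (hfA k) hcA
      rw [xk_eq b k]
      exact mul_mem hPA (prod_mem fun w _ => hooA (b k + w))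
  apply le_antisymm
  · rw [RSVB]
    apply Algebra.adjoin_le
    rintro x (⟨v, rfl⟩ | ⟨v, rfl⟩)
    · exact hooA v
    · rw [embB_repr_sum b v]
      exact sum_mem fun i _ =>
        mul_mem (A.algebraMap_mem _) (hxk ((i : ℕ) + 1) i (Nat.lt_succ_self _))
  · apply Algebra.adjoin_le
    rintro x (hx | ⟨k, rfl⟩)
    · exact Algebra.adjoin_mono Set.subset_union_left hx
    · simp only
      rw [fB_inv_eq b k]
      apply mul_mem
      · exact prod_mem fun w _ =>
          Algebra.subset_adjoin (Set.mem_union_right _ ⟨b k + w, rfl⟩)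
      · exact prod_mem fun u _ =>
          Algebra.subset_adjoin (Set.mem_union_left _ ⟨u, rfl⟩)

end
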